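/- The generalized Sawada–Kotera Hamiltonian H_SK and the quartic integral K_SK are in involution with respect to the canonical Poisson bracket: {H_SK, K_SK}₀ = 0 at every point of ℝ⁴ with y ≠ 0. Moreover, the cubic quantity K_{SK,0} = 3p_x·p_y + a·y³ + 3a·x²y + 3ω·x·y satisfies {H_SK, K_{SK,0}}₀ = −3μ·p_x/y³, so K_{SK,0} is a first integral if and only if μ = 0. -/

import Mathlib

lemma dpoly6 {c0 c1 c2 c3 c4 c5 c6 : ℝ} (x : ℝ) :
    deriv (fun t : ℝ => c0 + c1*t + c2*t^2 + c3*t^3 + c4*t^4 + c5*t^5 + c6*t^6) x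
      = c1 + 2*c2*x + 3*c3*x^2 + 4*c4*x^3 + 5*c5*x^4 + 6*c6*x^5 := by
  have h : HasDerivAt (fun t : ℝ => c0 + c1*t + c2*t^2 + c3*t^3 + c4*t^4 + c5*t^5 + c6*t^6)
      (c1 + 2*c2*x + 3*c3*x^2 + 4*c4*x^3 + 5*c5*x^4 + 6*c6*x^5) x := by
    have h0 := ((((((hasDerivAt_const x c0).add ((hasDerivAt_id x).const_mul c1)).add
      ((hasDerivAt_pow 2 x).const_mul c2)).add ((hasDerivAt_pow 3 x).const_mul c3)).add
      ((hasDerivAt_pow 4 x).const_mul c4)).add ((hasDerivAt_pow 5 x).const_mul c5)).add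
      ((hasDerivAt_pow 6 x).const_mul c6)
    refine h0.congr_deriv ?_
    push_cast; ring
  exact h.deriv

lemma dpoly6inv {c0 c1 c2 c3 c4 c5 c6 ci : ℝ} {x : ℝ} (hx : x ≠ 0) :
    deriv (fun t : ℝ => c0 + c1*t + c2*t^2 + c3*t^3 + c4*t^4 + c5*t^5 + c6*t^6 + ci/t^2) x
      = c1 + 2*c2*x + 3*c3*x^2 + 4*c4*x^3 + 5*c5*x^4 + 6*c6*x^5 - 2*ci/x^3 := by
  have h : HasDerivAt (fun t : ℝ => c0 + c1*t + c2*t^2 + c3*t^3 + c4*t^4 + c5*t^5 + c6*t^6 + ci/t^2)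
      (c1 + 2*c2*x + 3*c3*x^2 + 4*c4*x^3 + 5*c5*x^4 + 6*c6*x^5 - 2*ci/x^3) x := by
    have h0 := (((((((hasDerivAt_const x c0).add ((hasDerivAt_id x).const_mul c1)).add
      ((hasDerivAt_pow 2 x).const_mul c2)).add ((hasDerivAt_pow 3 x).const_mul c3)).add
      ((hasDerivAt_pow 4 x).const_mul c4)).add ((hasDerivAt_pow 5 x).const_mul c5)).add
      ((hasDerivAt_pow 6 x).const_mul c6)).add
      (((hasDerivAt_pow 2 x).inv (pow_ne_zero 2 hx)).const_mul ci)
    simp only [div_eq_mul_inv]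
    refine h0.congr_deriv ?_
    push_cast
    field_simp
    ring
  exact h.deriv

/-- Canonical Poisson bracket on ℝ⁴ with coordinates `(p_x, p_y, x, y)`. -/
noncomputable def pbracket (f g : ℝ → ℝ → ℝ → ℝ → ℝ) (px py x y : ℝ) : ℝ :=
    (deriv (fun t => f px py t y) x) * (deriv (fun t => g t py x y) px)
  - (deriv (fun t => f t py x y) px) * (deriv (fun t => g px py t y) x)
  + (deriv (fun t => f px py x t) y) * (deriv (fun t => g px t x y) py)
  - (deriv (fun t => f px t x y) py) * (deriv (fun t => g px py x t) y)

/-- The generalized Sawada–Kotera Hamiltonian. -/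
noncomputable def HSK (a ω μ : ℝ) (px py x y : ℝ) : ℝ :=
  (1/2)*(px^2 + py^2) + (ω/2)*(x^2 + y^2) + a*x*y^2 + (a/3)*x^3 + μ/(2*y^2)

/-- The quartic Sawada–Kotera integral. -/
noncomputable def KSK (a ω μ : ℝ) (px py x y : ℝ) : ℝ :=
  (3*px*py + a*y^3 + 3*a*x^2*y + 3*ω*x*y)^2 + μ*(9*px^2/y^2 + 12*a*x)

/-- The cubic quantity `K_{SK,0}`. -/
noncomputable def KSK0 (a ω : ℝ) (px py x y : ℝ) : ℝ :=
  3*px*py + a*y^3 + 3*a*x^2*y + 3*ω*x*y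

section partials
variable (a ω μ px py x y : ℝ)

lemma dH_x : deriv (fun t => HSK a ω μ px py t y) x = a*y^2 + ω*x + a*x^2 := by
  rw [show (fun t => HSK a ω μ px py t y)
      = (fun t : ℝ => ((1/2)*(px^2+py^2) + (ω/2)*y^2 + μ/(2*y^2)) + (a*y^2)*t + (ω/2)*t^2
          + (a/3)*t^3 + 0*t^4 + 0*t^5 + 0*t^6) from by funext t; simp only [HSK]; ring,
    dpoly6]
  ring

lemma dH_px : deriv (fun t => HSK a ω μ t py x y) px = px := by
  rw [show (fun t => HSK a ω μ t py x y)
      = (fun t : ℝ => ((1/2)*py^2 + (ω/2)*(x^2+y^2) + a*x*y^2 + (a/3)*x^3 + μ/(2*y^2)) + 0*t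
          + (1/2)*t^2 + 0*t^3 + 0*t^4 + 0*t^5 + 0*t^6) from by funext t; simp only [HSK]; ring,
    dpoly6]
  ring

lemma dH_py : deriv (fun t => HSK a ω μ px t x y) py = py := by
  rw [show (fun t => HSK a ω μ px t x y)
      = (fun t : ℝ => ((1/2)*px^2 + (ω/2)*(x^2+y^2) + a*x*y^2 + (a/3)*x^3 + μ/(2*y^2)) + 0*t
          + (1/2)*t^2 + 0*t^3 + 0*t^4 + 0*t^5 + 0*t^6) from by funext t; simp only [HSK]; ring,
    dpoly6]
  ring

lemma dH_y (hy : y ≠ 0) :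
    deriv (fun t => HSK a ω μ px py x t) y = ω*y + 2*a*x*y - μ/y^3 := by
  rw [show (fun t => HSK a ω μ px py x t)
      = (fun t : ℝ => ((1/2)*(px^2+py^2) + (ω/2)*x^2 + (a/3)*x^3) + 0*t + (ω/2 + a*x)*t^2
          + 0*t^3 + 0*t^4 + 0*t^5 + 0*t^6 + (μ/2)/t^2) from by funext t; simp only [HSK]; ring,
    dpoly6inv hy]
  field_simp
  ring

lemma dK_x :
    deriv (fun t => KSK a ω μ px py t y) x
      = 6*(3*px*py + a*y^3 + 3*a*x^2*y + 3*ω*x*y)*(2*a*x*y + ω*y) + 12*a*μ := by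
  rw [show (fun t => KSK a ω μ px py t y)
      = (fun t : ℝ => ((3*px*py + a*y^3)^2 + μ*(9*px^2/y^2))
          + (2*(3*px*py + a*y^3)*(3*ω*y) + 12*a*μ)*t
          + ((3*ω*y)^2 + 2*(3*px*py + a*y^3)*(3*a*y))*t^2
          + (2*(3*ω*y)*(3*a*y))*t^3 + ((3*a*y)^2)*t^4 + 0*t^5 + 0*t^6) from by
        funext t; simp only [KSK]; ring,
    dpoly6]
  ring

lemma dK_px :
    deriv (fun t => KSK a ω μ t py x y) px
      = 6*py*(3*px*py + a*y^3 + 3*a*x^2*y + 3*ω*x*y) + 18*μ*px/y^2 := by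
  rw [show (fun t => KSK a ω μ t py x y)
      = (fun t : ℝ => ((a*y^3 + 3*a*x^2*y + 3*ω*x*y)^2 + 12*a*μ*x)
          + (6*py*(a*y^3 + 3*a*x^2*y + 3*ω*x*y))*t
          + (9*py^2 + 9*μ/y^2)*t^2 + 0*t^3 + 0*t^4 + 0*t^5 + 0*t^6) from by
        funext t; simp only [KSK]; ring,
    dpoly6]
  ring

lemma dK_py :
    deriv (fun t => KSK a ω μ px t x y) py
      = 6*px*(3*px*py + a*y^3 + 3*a*x^2*y + 3*ω*x*y) := by
  rw [show (fun t => KSK a ω μ px t x y)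
      = (fun t : ℝ => ((a*y^3 + 3*a*x^2*y + 3*ω*x*y)^2 + μ*(9*px^2/y^2 + 12*a*x))
          + (6*px*(a*y^3 + 3*a*x^2*y + 3*ω*x*y))*t
          + (9*px^2)*t^2 + 0*t^3 + 0*t^4 + 0*t^5 + 0*t^6) from by
        funext t; simp only [KSK]; ring,
    dpoly6]
  ring

lemma dK_y (hy : y ≠ 0) :
    deriv (fun t => KSK a ω μ px py x t) y
      = 6*(3*px*py + a*y^3 + 3*a*x^2*y + 3*ω*x*y)*(a*y^2 + a*x^2 + ω*x)
        - 18*μ*px^2/y^3 := by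
  rw [show (fun t => KSK a ω μ px py x t)
      = (fun t : ℝ => (9*px^2*py^2 + 12*a*μ*x)
          + (2*(3*px*py)*(3*a*x^2 + 3*ω*x))*t
          + ((3*a*x^2 + 3*ω*x)^2)*t^2
          + (2*(3*px*py)*a)*t^3
          + (2*(3*a*x^2 + 3*ω*x)*a)*t^4 + 0*t^5 + (a^2)*t^6 + (9*μ*px^2)/t^2) from by
        funext t; simp only [KSK]; ring,
    dpoly6inv hy]
  ring

lemma dK0_x : deriv (fun t => KSK0 a ω px py t y) x = 3*ω*y + 6*a*x*y := by
  rw [show (fun t => KSK0 a ω px py t y)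
      = (fun t : ℝ => (3*px*py + a*y^3) + (3*ω*y)*t + (3*a*y)*t^2
          + 0*t^3 + 0*t^4 + 0*t^5 + 0*t^6) from by funext t; simp only [KSK0]; ring,
    dpoly6]
  ring

lemma dK0_px : deriv (fun t => KSK0 a ω t py x y) px = 3*py := by
  rw [show (fun t => KSK0 a ω t py x y)
      = (fun t : ℝ => (a*y^3 + 3*a*x^2*y + 3*ω*x*y) + (3*py)*t + 0*t^2
          + 0*t^3 + 0*t^4 + 0*t^5 + 0*t^6) from by funext t; simp only [KSK0]; ring,
    dpoly6]
  ring

lemma dK0_py : deriv (fun t => KSK0 a ω px t x y) py = 3*px := by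
  rw [show (fun t => KSK0 a ω px t x y)
      = (fun t : ℝ => (a*y^3 + 3*a*x^2*y + 3*ω*x*y) + (3*px)*t + 0*t^2
          + 0*t^3 + 0*t^4 + 0*t^5 + 0*t^6) from by funext t; simp only [KSK0]; ring,
    dpoly6]
  ring

lemma dK0_y : deriv (fun t => KSK0 a ω px py x t) y = 3*a*y^2 + 3*a*x^2 + 3*ω*x := by
  rw [show (fun t => KSK0 a ω px py x t)
      = (fun t : ℝ => (3*px*py) + (3*a*x^2 + 3*ω*x)*t + 0*t^2
          + a*t^3 + 0*t^4 + 0*t^5 + 0*t^6) from by funext t; simp only [KSK0]; ring,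
    dpoly6]
  ring

end partials

/-- `{H_SK, K_SK}₀ = 0` on `{y ≠ 0}`, while
`{H_SK, K_{SK,0}}₀ = −3μp_x/y³`, so that `K_{SK,0}` is a first integral iff `μ = 0`. -/
theorem SK_involution (a ω μ : ℝ) :
    (∀ px py x y : ℝ, y ≠ 0 →
        pbracket (HSK a ω μ) (KSK a ω μ) px py x y = 0)
    ∧ (∀ px py x y : ℝ, y ≠ 0 →
        pbracket (HSK a ω μ) (fun px' py' x' y' => KSK0 a ω px' py' x' y') px py x y
          = -3*μ*px/y^3)
    ∧ ((∀ px py x y : ℝ, y ≠ 0 →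
        pbracket (HSK a ω μ) (fun px' py' x' y' => KSK0 a ω px' py' x' y') px py x y = 0)
        ↔ μ = 0) := by
  have h2 : ∀ px py x y : ℝ, y ≠ 0 →
      pbracket (HSK a ω μ) (fun px' py' x' y' => KSK0 a ω px' py' x' y') px py x y
        = -3*μ*px/y^3 := by
    intro px py x y hy
    simp only [pbracket, dH_x, dH_px, dH_py, dH_y a ω μ px py x y hy,
      dK0_x, dK0_px, dK0_py, dK0_y]
    field_simp
    ring
  refine ⟨?_, h2, ?_⟩
  · intro px py x y hy
    simp only [pbracket, dH_x, dH_px, dH_py, dH_y a ω μ px py x y hy,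
      dK_x, dK_px, dK_py, dK_y a ω μ px py x y hy]
    field_simp
    ring
  · constructor
    · intro h
      have := h 1 0 0 1 one_ne_zero
      rw [h2 1 0 0 1 one_ne_zero] at this
      norm_num at this
      linarith
    · intro hμ px py x y hy
      rw [h2 px py x y hy, hμ]
      simp
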